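/- For any n ∈ ℕ, q > 0, any subset A ⊆ [0,1] and any s, t ∈ {1,…,n}, one has | E_{μ_{n,q}}[ 1_A(π(s)/n) ] − E_{μ_{n,q}}[ 1_A(π(t)/n) ] | ≤ M, where M = max(|1−q^d|, |1−q^{−d}|) and d = |s−t|. -/

import Mathlib

open Filter Finset MeasureTheory

/-- Number of inversions of a permutation of `Fin n`. -/
def inversions (n : ℕ) (π : Equiv.Perm (Fin n)) : ℕ :=
  (Finset.univ.filter (fun p : Fin n × Fin n => p.1 < p.2 ∧ π p.2 < π p.1)).card

/-- The `(n,q)`-Mallows probability mass function on `S_n`. -/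
noncomputable def mallowsPMF (n : ℕ) (q : ℝ) (π : Equiv.Perm (Fin n)) : ℝ :=
  q ^ inversions n π / ∑ σ : Equiv.Perm (Fin n), q ^ inversions n σ

open Classical in
/-- The `(n,q)`-Mallows probability of an event `P` of permutations. -/
noncomputable def mallowsProb (n : ℕ) (q : ℝ) (P : Equiv.Perm (Fin n) → Prop) : ℝ :=
  ∑ π : Equiv.Perm (Fin n), if P π then mallowsPMF n q π else 0

/-- Expectation with respect to the `(n,q)`-Mallows measure. -/
noncomputable def mallowsExp (n : ℕ) (q : ℝ) (f : Equiv.Perm (Fin n) → ℝ) : ℝ :=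
  ∑ π : Equiv.Perm (Fin n), mallowsPMF n q π * f π

/-- Action of a permutation of `Fin n` on one-based indices `{1,…,n}`. -/
def permAct (n : ℕ) (π : Equiv.Perm (Fin n)) (i : ℕ) : ℕ :=
  if h : 1 ≤ i ∧ i ≤ n then ((π ⟨i - 1, by omega⟩ : Fin n) : ℕ) + 1 else i

/-- The limiting density `u(x,y,β)` from Starr's theorem. -/
noncomputable def mallowsU (x y β : ℝ) : ℝ :=
  if β = 0 then 1
  else (β / 2) * Real.sinh (β / 2) /
    (Real.exp (β / 4) * Real.cosh (β * (x - y) / 2)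
      - Real.exp (-β / 4) * Real.cosh (β * (x + y - 1) / 2)) ^ 2

/- ## Auxiliary lemmas -/

lemma swap_adj_lt {n : ℕ} {a b : Fin n} (hab : (a : ℕ) + 1 = (b : ℕ)) {i j : Fin n}
    (hij : i < j) (hne : ¬(i = a ∧ j = b)) :
    Equiv.swap a b i < Equiv.swap a b j := by
  have hval : ∀ x : Fin n, ((Equiv.swap a b) x : ℕ)
      = if x = a then (b : ℕ) else if x = b then (a : ℕ) else (x : ℕ) := by
    intro x; rw [Equiv.swap_apply_def]; split_ifs <;> rfl
  rw [Fin.lt_def] at hij ⊢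
  rw [hval, hval]
  simp only [Fin.ext_iff] at hne
  split_ifs <;>
    first
      | omega
      | (simp only [Fin.ext_iff, not_and] at * <;> omega)

lemma inversions_mul_swap {n : ℕ} (π : Equiv.Perm (Fin n)) {a b : Fin n}
    (hab : (a : ℕ) + 1 = (b : ℕ)) (hlt : π a < π b) :
    inversions n (π * Equiv.swap a b) = inversions n π + 1 := by
  classical
  set s := Equiv.swap a b with hs
  set S1 := Finset.univ.filter
    (fun p : Fin n × Fin n => p.1 < p.2 ∧ (π * s) p.2 < (π * s) p.1) with hS1
  set S2 := Finset.univ.filter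
    (fun p : Fin n × Fin n => p.1 < p.2 ∧ π p.2 < π p.1) with hS2
  have hab' : a < b := by rw [Fin.lt_def]; omega
  have haneb : a ≠ b := ne_of_lt hab'
  have hsa : s a = b := Equiv.swap_apply_left a b
  have hsb : s b = a := Equiv.swap_apply_right a b
  have hmem1 : (a, b) ∈ S1 := by
    simp only [hS1, mem_filter, mem_univ, true_and]
    refine ⟨hab', ?_⟩
    show π (s b) < π (s a)
    rw [hsa, hsb]; exact hlt
  have hmem2 : (a, b) ∉ S2 := by
    simp only [hS2, mem_filter, mem_univ, true_and, not_and]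
    intro _; exact not_lt.mpr hlt.le
  have hG : ∀ p : Fin n × Fin n, ∀ σ : Equiv.Perm (Fin n),
      p ∈ (Finset.univ.filter
        (fun p : Fin n × Fin n => p.1 < p.2 ∧ σ p.2 < σ p.1)).erase (a, b) →
      (s p.1, s p.2) ≠ (a, b) := by
    intro p σ hp
    simp only [mem_erase, mem_filter, mem_univ, true_and] at hp
    intro hcon
    have h1 : s p.1 = a := congrArg Prod.fst hcon
    have h2 : s p.2 = b := congrArg Prod.snd hcon
    have e1 : p.1 = b := by
      have := congrArg s h1; rwa [Equiv.swap_apply_self, hsa] at this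
    have e2 : p.2 = a := by
      have := congrArg s h2; rwa [Equiv.swap_apply_self, hsb] at this
    have := hp.2.1
    rw [e1, e2] at this
    exact absurd this (not_lt.mpr hab'.le)
  have hcard : (S1.erase (a, b)).card = (S2.erase (a, b)).card := by
    apply Finset.card_bij' (fun p _ => (s p.1, s p.2)) (fun p _ => (s p.1, s p.2))
    · intro p hp
      have hne := hG p (π * s) hp
      simp only [hS1, mem_erase, mem_filter, mem_univ, true_and] at hp
      simp only [hS2, mem_erase, mem_filter, mem_univ, true_and]
      refine ⟨hne, ?_, ?_⟩
      · exact swap_adj_lt hab hp.2.1 (by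
          intro hc; exact hp.1 (Prod.ext hc.1 hc.2))
      · have := hp.2.2
        simpa [Equiv.Perm.mul_apply] using this
    · intro p hp
      have hne := hG p π hp
      simp only [hS2, mem_erase, mem_filter, mem_univ, true_and] at hp
      simp only [hS1, mem_erase, mem_filter, mem_univ, true_and]
      refine ⟨hne, ?_, ?_⟩
      · exact swap_adj_lt hab hp.2.1 (by
          intro hc; exact hp.1 (Prod.ext hc.1 hc.2))
      · simp only [Equiv.Perm.mul_apply, hs, Equiv.swap_apply_self]
        exact hp.2.2
    · intro p _; simp [hs, Equiv.swap_apply_self]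
    · intro p _; simp [hs, Equiv.swap_apply_self]
  have c1 : (S1.erase (a, b)).card + 1 = S1.card := Finset.card_erase_add_one hmem1
  have c2 : S2.erase (a, b) = S2 := Finset.erase_eq_of_notMem hmem2
  have e1 : inversions n (π * s) = S1.card := rfl
  have e2 : inversions n π = S2.card := rfl
  rw [e1, e2, ← c1, hcard, c2]

lemma inversions_mul_swap' {n : ℕ} (π : Equiv.Perm (Fin n)) {a b : Fin n}
    (hab : (a : ℕ) + 1 = (b : ℕ)) (hlt : π b < π a) :
    inversions n π = inversions n (π * Equiv.swap a b) + 1 := by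
  have h := inversions_mul_swap (π * Equiv.swap a b) hab (by
    simp only [Equiv.Perm.mul_apply, Equiv.swap_apply_left, Equiv.swap_apply_right]
    exact hlt)
  rwa [mul_assoc, Equiv.swap_mul_self, mul_one] at h

lemma mallowsZ_pos (n : ℕ) {q : ℝ} (hq : 0 < q) :
    0 < ∑ σ : Equiv.Perm (Fin n), q ^ inversions n σ := by
  apply Finset.sum_pos (fun σ _ => pow_pos hq _)
  exact ⟨1, Finset.mem_univ 1⟩

lemma mallowsPMF_nonneg (n : ℕ) {q : ℝ} (hq : 0 < q) (π : Equiv.Perm (Fin n)) :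
    0 ≤ mallowsPMF n q π :=
  div_nonneg (pow_nonneg hq.le _) (mallowsZ_pos n hq).le

lemma mallowsPMF_sum (n : ℕ) {q : ℝ} (hq : 0 < q) :
    ∑ π : Equiv.Perm (Fin n), mallowsPMF n q π = 1 := by
  simp only [mallowsPMF]
  rw [← Finset.sum_div]
  exact div_self (mallowsZ_pos n hq).ne'

lemma abs_one_sub_le {r : ℝ} (hr : 0 < r) : |1 - r| ≤ max r r⁻¹ - 1 := by
  have h2 : 2 ≤ r + r⁻¹ := by
    nlinarith [sq_nonneg (r - 1), mul_inv_cancel₀ (ne_of_gt hr)]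
  rcases le_total 1 r with h | h
  · rw [abs_of_nonpos (by linarith)]
    have := le_max_left r r⁻¹; linarith
  · rw [abs_of_nonneg (by linarith)]
    have := le_max_right r r⁻¹; linarith

lemma adj_bound (n : ℕ) {q : ℝ} (hq : 0 < q) (g : Fin n → ℝ)
    (hg0 : ∀ v, 0 ≤ g v) (hg1 : ∀ v, g v ≤ 1) (a b : Fin n)
    (hab : (a : ℕ) + 1 = (b : ℕ)) :
    |(∑ π : Equiv.Perm (Fin n), mallowsPMF n q π * g (π a))
      - ∑ π : Equiv.Perm (Fin n), mallowsPMF n q π * g (π b)|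
    ≤ max q q⁻¹ - 1 := by
  set Q := max q q⁻¹ with hQ
  set s := Equiv.swap a b with hs
  have hreidx : ∑ π : Equiv.Perm (Fin n), mallowsPMF n q π * g (π b)
      = ∑ π : Equiv.Perm (Fin n), mallowsPMF n q (π * s) * g (π a) := by
    rw [← Equiv.sum_comp (Equiv.mulRight s)
      (fun π => mallowsPMF n q π * g (π b))]
    apply Finset.sum_congr rfl
    intro π _
    have h2 : (π * s) b = π a := by
      simp [hs, Equiv.Perm.mul_apply, Equiv.swap_apply_right]
    simp only [Equiv.coe_mulRight, h2]
  rw [hreidx, ← Finset.sum_sub_distrib]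
  have key : ∀ π : Equiv.Perm (Fin n),
      |mallowsPMF n q π * g (π a) - mallowsPMF n q (π * s) * g (π a)|
        ≤ mallowsPMF n q π * (Q - 1) := by
    intro π
    have hpne : π a ≠ π b := fun h => (ne_of_lt (show a < b by rw [Fin.lt_def]; omega))
      (π.injective h)
    have habs : ∀ c : ℝ, mallowsPMF n q (π * s) = c * mallowsPMF n q π → 0 < c →
        |mallowsPMF n q π * g (π a) - mallowsPMF n q (π * s) * g (π a)|
          ≤ mallowsPMF n q π * |1 - c| := by
      intro c hc hcpos
      rw [hc]
      have : mallowsPMF n q π * g (π a) - c * mallowsPMF n q π * g (π a)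
          = (mallowsPMF n q π * (1 - c)) * g (π a) := by ring
      rw [this, abs_mul, abs_mul, abs_of_nonneg (mallowsPMF_nonneg n hq π),
        abs_of_nonneg (hg0 _)]
      calc mallowsPMF n q π * |1 - c| * g (π a)
          ≤ mallowsPMF n q π * |1 - c| * 1 := by
            apply mul_le_mul_of_nonneg_left (hg1 _)
            exact mul_nonneg (mallowsPMF_nonneg n hq π) (abs_nonneg _)
        _ = mallowsPMF n q π * |1 - c| := by ring
    rcases lt_or_gt_of_ne hpne with hlt | hgt
    · have hinv := inversions_mul_swap π hab hlt
      have hc : mallowsPMF n q (π * s) = q * mallowsPMF n q π := by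
        simp only [mallowsPMF, hs, hinv, pow_succ]; ring
      calc _ ≤ mallowsPMF n q π * |1 - q| := habs q hc hq
        _ ≤ mallowsPMF n q π * (Q - 1) :=
          mul_le_mul_of_nonneg_left (abs_one_sub_le hq) (mallowsPMF_nonneg n hq π)
    · have hinv := inversions_mul_swap' π hab hgt
      have hc : mallowsPMF n q (π * s) = q⁻¹ * mallowsPMF n q π := by
        simp only [mallowsPMF, hs, hinv, pow_succ]
        field_simp
      have hQ' : |1 - q⁻¹| ≤ Q - 1 := by
        have := abs_one_sub_le (inv_pos.mpr hq)
        rwa [inv_inv, max_comm] at this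
      calc _ ≤ mallowsPMF n q π * |1 - q⁻¹| := habs q⁻¹ hc (inv_pos.mpr hq)
        _ ≤ mallowsPMF n q π * (Q - 1) :=
          mul_le_mul_of_nonneg_left hQ' (mallowsPMF_nonneg n hq π)
  calc |∑ π : Equiv.Perm (Fin n),
        (mallowsPMF n q π * g (π a) - mallowsPMF n q (π * s) * g (π a))|
      ≤ ∑ π : Equiv.Perm (Fin n),
        |mallowsPMF n q π * g (π a) - mallowsPMF n q (π * s) * g (π a)| :=
        Finset.abs_sum_le_sum_abs _ _
    _ ≤ ∑ π : Equiv.Perm (Fin n), mallowsPMF n q π * (Q - 1) :=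
        Finset.sum_le_sum (fun π _ => key π)
    _ = (∑ π : Equiv.Perm (Fin n), mallowsPMF n q π) * (Q - 1) := by
        rw [← Finset.sum_mul]
    _ = Q - 1 := by rw [mallowsPMF_sum n hq, one_mul]

open Classical in
lemma prob_eq (n : ℕ) (q : ℝ) (A : Set ℝ) (k : ℕ) (hk : 1 ≤ k ∧ k ≤ n) :
    mallowsProb n q (fun π => (permAct n π k : ℝ) / n ∈ A)
      = ∑ π : Equiv.Perm (Fin n), mallowsPMF n q π *
          (if ((((π ⟨k - 1, by omega⟩ : Fin n) : ℕ) + 1 : ℕ) : ℝ) / n ∈ A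
            then 1 else 0) := by
  classical
  rw [mallowsProb]
  apply Finset.sum_congr rfl
  intro π _
  have hpa : permAct n π k = ((π ⟨k - 1, by omega⟩ : Fin n) : ℕ) + 1 := by
    rw [permAct, dif_pos hk]
  rw [hpa]
  by_cases hp : ((((π ⟨k - 1, by omega⟩ : Fin n) : ℕ) + 1 : ℕ) : ℝ) / n ∈ A
  · rw [if_pos hp, if_pos hp, mul_one]
  · rw [if_neg hp, if_neg hp, mul_zero]

lemma step_bound (n : ℕ) {q : ℝ} (hq : 0 < q) (A : Set ℝ) (k : ℕ)
    (hk1 : 1 ≤ k) (hk2 : k + 1 ≤ n) :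
    |mallowsProb n q (fun π => (permAct n π k : ℝ) / n ∈ A)
      - mallowsProb n q (fun π => (permAct n π (k + 1) : ℝ) / n ∈ A)|
    ≤ max q q⁻¹ - 1 := by
  classical
  have hk : 1 ≤ k ∧ k ≤ n := ⟨hk1, by omega⟩
  have hk' : 1 ≤ k + 1 ∧ k + 1 ≤ n := ⟨by omega, hk2⟩
  rw [prob_eq n q A k hk, prob_eq n q A (k + 1) hk']
  set g : Fin n → ℝ := fun v => if (((v : ℕ) + 1 : ℕ) : ℝ) / n ∈ A then 1 else 0 with hg
  have hgeq1 : ∀ π : Equiv.Perm (Fin n),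
      (if ((((π ⟨k - 1, by omega⟩ : Fin n) : ℕ) + 1 : ℕ) : ℝ) / n ∈ A then (1:ℝ) else 0)
        = g (π ⟨k - 1, by omega⟩) := fun π => rfl
  have hgeq2 : ∀ π : Equiv.Perm (Fin n),
      (if ((((π ⟨k + 1 - 1, by omega⟩ : Fin n) : ℕ) + 1 : ℕ) : ℝ) / n ∈ A then (1:ℝ) else 0)
        = g (π ⟨k, by omega⟩) := by
    intro π
    have : (⟨k + 1 - 1, by omega⟩ : Fin n) = ⟨k, by omega⟩ := by
      apply Fin.ext; simp
    rw [this]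
  simp only [hgeq1, hgeq2]
  exact adj_bound n hq g
    (fun v => by simp only [hg]; split_ifs <;> norm_num)
    (fun v => by simp only [hg]; split_ifs <;> norm_num)
    ⟨k - 1, by omega⟩ ⟨k, by omega⟩ (by show k - 1 + 1 = k; omega)

lemma tele_bound (n : ℕ) {q : ℝ} (hq : 0 < q) (A : Set ℝ) :
    ∀ (d s : ℕ), 1 ≤ s → s + d ≤ n →
    |mallowsProb n q (fun π => (permAct n π s : ℝ) / n ∈ A)
      - mallowsProb n q (fun π => (permAct n π (s + d) : ℝ) / n ∈ A)|
    ≤ d * (max q q⁻¹ - 1) := by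
  intro d
  induction d with
  | zero => intro s _ _; simp
  | succ d ih =>
    intro s hs1 hsd
    have h1 := ih s hs1 (by omega)
    have h2 := step_bound n hq A (s + d) (by omega) (by omega)
    have : s + (d + 1) = (s + d) + 1 := by omega
    rw [this]
    calc |mallowsProb n q (fun π => (permAct n π s : ℝ) / n ∈ A)
          - mallowsProb n q (fun π => (permAct n π ((s + d) + 1) : ℝ) / n ∈ A)|
        ≤ |mallowsProb n q (fun π => (permAct n π s : ℝ) / n ∈ A)
            - mallowsProb n q (fun π => (permAct n π (s + d) : ℝ) / n ∈ A)|
          + |mallowsProb n q (fun π => (permAct n π (s + d) : ℝ) / n ∈ A)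
            - mallowsProb n q (fun π => (permAct n π ((s + d) + 1) : ℝ) / n ∈ A)| :=
          abs_sub_le _ _ _
      _ ≤ d * (max q q⁻¹ - 1) + (max q q⁻¹ - 1) := add_le_add h1 h2
      _ = (d + 1 : ℕ) * (max q q⁻¹ - 1) := by push_cast; ring

lemma final_bound (n : ℕ) {q : ℝ} (hq : 0 < q) (A : Set ℝ)
    (s t : ℕ) (hst : s ≤ t) (hs : 1 ≤ s) (ht : t ≤ n) :
    |mallowsProb n q (fun π => (permAct n π s : ℝ) / n ∈ A)
      - mallowsProb n q (fun π => (permAct n π t : ℝ) / n ∈ A)|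
    ≤ max |1 - q ^ (t - s)| |1 - q⁻¹ ^ (t - s)| := by
  set d := t - s with hd
  have hQ1 : 1 ≤ max q q⁻¹ := by
    rcases le_total 1 q with h | h
    · exact le_max_of_le_left h
    · exact le_max_of_le_right (one_le_inv_iff₀.mpr ⟨hq, h⟩)
  have htt : t = s + d := by omega
  have h1 : |mallowsProb n q (fun π => (permAct n π s : ℝ) / n ∈ A)
      - mallowsProb n q (fun π => (permAct n π t : ℝ) / n ∈ A)|
      ≤ d * (max q q⁻¹ - 1) := by
    rw [htt]; exact tele_bound n hq A d s hs (by omega)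
  have h2 : (d : ℝ) * (max q q⁻¹ - 1) ≤ (max q q⁻¹) ^ d - 1 := by
    have := one_add_mul_le_pow (a := max q q⁻¹ - 1) (by linarith) d
    have hrw : (1 : ℝ) + (max q q⁻¹ - 1) = max q q⁻¹ := by ring
    rw [hrw] at this
    linarith
  have h3 : (max q q⁻¹) ^ d - 1 ≤ max |1 - q ^ d| |1 - q⁻¹ ^ d| := by
    rcases le_total 1 q with h | h
    · have : max q q⁻¹ = q := max_eq_left (by
        calc q⁻¹ ≤ 1 := by rw [inv_le_one_iff₀]; right; exact h
          _ ≤ q := h)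
      rw [this]
      have hq1 : 1 ≤ q ^ d := one_le_pow₀ h
      have : |1 - q ^ d| = q ^ d - 1 := by rw [abs_of_nonpos (by linarith)]; ring
      rw [← this]; exact le_max_left _ _
    · have hinv : 1 ≤ q⁻¹ := one_le_inv_iff₀.mpr ⟨hq, h⟩
      have : max q q⁻¹ = q⁻¹ := max_eq_right (le_trans h hinv)
      rw [this]
      have hq1 : 1 ≤ q⁻¹ ^ d := one_le_pow₀ hinv
      have : |1 - q⁻¹ ^ d| = q⁻¹ ^ d - 1 := by rw [abs_of_nonpos (by linarith)]; ring
      rw [← this]; exact le_max_right _ _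
  linarith

/-- **Lemma 5.6.** For any `A ⊆ [0,1]` and `s, t ∈ {1,…,n}`,
`| E_{μ_{n,q}}[1_A(π(s)/n)] − E_{μ_{n,q}}[1_A(π(t)/n)] | ≤ max(|1−q^d|, |1−q^{−d}|)`
where `d = |s − t|`. -/
theorem mallows_indicator_expectation_diff (n : ℕ) (q : ℝ) (hq : 0 < q)
    (A : Set ℝ) (hA : A ⊆ Set.Icc (0 : ℝ) 1)
    (s t : ℕ) (hs : 1 ≤ s ∧ s ≤ n) (ht : 1 ≤ t ∧ t ≤ n) :
    |mallowsProb n q (fun π => (permAct n π s : ℝ) / n ∈ A)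
        - mallowsProb n q (fun π => (permAct n π t : ℝ) / n ∈ A)|
      ≤ max |1 - q ^ (max s t - min s t)| |1 - q⁻¹ ^ (max s t - min s t)| := by
  rcases le_total s t with h | h
  · rw [max_eq_right h, min_eq_left h]
    exact final_bound n hq A s t h hs.1 ht.2
  · rw [max_eq_left h, min_eq_right h, abs_sub_comm]
    exact final_bound n hq A t s h ht.1 hs.2
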